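/- There exists a constant C > 0 such that for all λ > 0, μ > 0 and integers n ≥ 1 with R = λ/μ < n and ρ := R/n ≥ 0.1, writing W := X̃(∞), the following hold: (i) for every γ > (2 + δ|ζ|)/(2|ζ|), E[exp((2|ζ|/(2+δ|ζ|) − 1/γ)·W)·1(W ≥ −ζ)] ≤ γ·C·e^{2ζ²/(2+δ|ζ|)}; and (ii) E[exp((2|ζ|/(2+δ|ζ|))·W)·1(W ≥ −ζ)] ≤ δ^{−2}·(1/|ζ| + δ)³·C·e^{2ζ²/(2+δ|ζ|)}. -/

import Mathlib

open MeasureTheory Set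

lemma poly_ineq (s : ℝ) (h0 : 0 ≤ s) :
    (1+s+s^2/2+s^3/6+(5/96)*s^4)^2 * ((1-s)*(1+s)^2) ≤ (1+s)^3 - (8/13)*s^3 := by
  nlinarith [pow_nonneg h0 3, pow_nonneg h0 4, pow_nonneg h0 5, pow_nonneg h0 6,
    pow_nonneg h0 7, pow_nonneg h0 8, pow_nonneg h0 9, pow_nonneg h0 10, pow_nonneg h0 11]

lemma exp_le_poly (s : ℝ) (h0 : 0 ≤ s) (h1 : s ≤ 1) :
    Real.exp s ≤ 1+s+s^2/2+s^3/6+(5/96)*s^4 := by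
  have h := Real.exp_bound (x := s) (by rw [abs_of_nonneg h0]; exact h1) (n := 4) (by norm_num)
  have h2 := (abs_le.mp h).2
  simp [Finset.sum_range_succ, abs_of_nonneg h0] at h2
  norm_num [Nat.factorial] at h2 ⊢
  nlinarith [h2]

lemma one_sub_exp_neg (t : ℝ) (h0 : 0 ≤ t) (h1 : t ≤ 1) :
    t / 4 ≤ 1 - Real.exp (-t) := by
  have h := Real.exp_bound (x := -t) (by rw [abs_neg, abs_of_nonneg h0]; exact h1) (n := 2) (by norm_num)
  have h2 := (abs_le.mp h).2
  simp [Finset.sum_range_succ, abs_neg, abs_of_nonneg h0] at h2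
  norm_num [Nat.factorial] at h2 ⊢
  nlinarith [h2, sq_nonneg t]

lemma key_exp (x : ℝ) (hx : 0 < x) :
    Real.exp (2*x/(2+x)) * (1+x)^2 ≤ (1+x)^3 - (1/13)*x^3 := by
  set s : ℝ := x/(2+x) with hs
  have h2x : (0:ℝ) < 2 + x := by linarith
  have hs0 : 0 ≤ s := by positivity
  have hs1 : s < 1 := by rw [hs, div_lt_one h2x]; linarith
  have hB := exp_le_poly s hs0 hs1.le
  have hBpos : (0:ℝ) < 1+s+s^2/2+s^3/6+(5/96)*s^4 := by positivity
  have hexp2 : Real.exp (2*x/(2+x)) ≤ (1+s+s^2/2+s^3/6+(5/96)*s^4)^2 := by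
    have h : 2*x/(2+x) = s + s := by rw [hs]; ring
    rw [h, Real.exp_add, sq]
    exact mul_le_mul hB hB (Real.exp_pos s).le hBpos.le
  have hpoly := poly_ineq s hs0
  have hident : ((1+s)^3 - (8/13)*s^3) * (2+x)^3 = (8*(1+x)^3 - (8/13)*x^3) := by
    rw [hs]; field_simp; ring
  have hident2 : ((1-s)*(1+s)^2) * (2+x)^3 = 8*(1+x)^2 := by
    rw [hs]; field_simp; ring
  have h3 : (0:ℝ) < (2+x)^3 := by positivity
  have hpoly2 : (1+s+s^2/2+s^3/6+(5/96)*s^4)^2 * (8*(1+x)^2) ≤ 8*(1+x)^3 - (8/13)*x^3 := by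
    calc (1+s+s^2/2+s^3/6+(5/96)*s^4)^2 * (8*(1+x)^2)
        = ((1+s+s^2/2+s^3/6+(5/96)*s^4)^2 * ((1-s)*(1+s)^2)) * (2+x)^3 := by
          rw [mul_assoc, hident2]
      _ ≤ ((1+s)^3 - (8/13)*s^3) * (2+x)^3 := mul_le_mul_of_nonneg_right hpoly h3.le
      _ = 8*(1+x)^3 - (8/13)*x^3 := hident
  have h1x : (0:ℝ) < (1+x)^2 := by positivity
  nlinarith [mul_le_mul_of_nonneg_right hexp2 (mul_pos (by norm_num : (0:ℝ)<8) h1x).le]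

lemma geom_aux (f : ℕ → ℝ) (n : ℕ) (a r : ℝ) (h0 : 0 ≤ r) (h1 : r < 1)
    (hlt : ∀ k, k < n → f k = 0) (hge : ∀ j, f (n + j) = a * r ^ j) :
    Summable f ∧ ∑' k, f k = a / (1 - r) := by
  have hs : Summable (fun j : ℕ => a * r ^ j) :=
    (summable_geometric_of_lt_one h0 h1).mul_left a
  have hs' : Summable (fun j : ℕ => f (j + n)) := by
    have he : (fun j : ℕ => f (j + n)) = fun j : ℕ => a * r ^ j := by
      funext j; rw [add_comm, hge]
    rw [he]; exact hs
  have hsf : Summable f := (summable_nat_add_iff n).mp hs'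
  refine ⟨hsf, ?_⟩
  have hst := hsf.sum_add_tsum_nat_add n
  rw [← hst, Finset.sum_eq_zero (fun i hi => hlt i (Finset.mem_range.mp hi)), zero_add]
  have he2 : ∑' j : ℕ, f (j + n) = ∑' j : ℕ, a * r ^ j := by
    apply tsum_congr; intro j; rw [add_comm, hge]
  rw [he2, tsum_mul_left, tsum_geometric_of_lt_one h0 h1, div_eq_mul_inv]

lemma down_half (pi : ℕ → ℝ) (hpos : ∀ k, 0 ≤ pi k) (R : ℝ) (hR : 0 < R) (n : ℕ)
    (hRn : R ≤ (n : ℝ))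
    (hrec : ∀ k, k < n → R * pi k = ((k:ℝ)+1) * pi (k+1)) :
    ∀ j, j ≤ n → ((j:ℝ) ≤ Real.sqrt R) → pi n * (2*R - (j:ℝ)^2) ≤ 2*R * pi (n - j) := by
  intro j
  induction j with
  | zero => intro _ _; simp; nlinarith [hpos n]
  | succ j ih =>
    intro hjn hjR
    push_cast at hjR
    have hjn' : j ≤ n := by omega
    have hjR' : (j:ℝ) ≤ Real.sqrt R := by linarith
    have IH := ih hjn' hjR'
    have hk : n - (j+1) < n := by omega
    have hrec' := hrec (n - (j+1)) hk
    have hplus : n - (j+1) + 1 = n - j := by omega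
    rw [hplus] at hrec'
    have hcast : ((n - (j+1) : ℕ) : ℝ) + 1 = (n:ℝ) - (j:ℝ) := by
      rw [Nat.cast_sub hjn]; push_cast; ring
    rw [hcast] at hrec'
    have hj1sq : ((j:ℝ)+1)^2 ≤ R := by
      have h1 : (0:ℝ) ≤ (j:ℝ)+1 := by positivity
      nlinarith [Real.sq_sqrt hR.le, Real.sqrt_nonneg R]
    have hjR2 : (j:ℝ) ≤ R := by nlinarith [Nat.cast_nonneg (α := ℝ) j]
    have hpnj := hpos (n - j)
    have hpn := hpos n
    have h1 := mul_le_mul_of_nonneg_left IH (sub_nonneg.mpr hjR2)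
    have h2 : 0 ≤ 2*R*((n:ℝ) - R) * pi (n - j) := by
      have h := sub_nonneg.mpr hRn
      positivity
    have h3 : 0 ≤ pi n * ((j:ℝ)^3 + R) := by positivity
    have hrec2 : 2*R*(R * pi (n-(j+1))) = 2*R*(((n:ℝ) - (j:ℝ)) * pi (n - j)) := by
      rw [hrec']
    have hgoal : R * (pi n * (2*R - ((j:ℝ)+1)^2)) ≤ R * (2*R * pi (n-(j+1))) := by
      nlinarith [h1, h2, h3, hrec2]
    have hfin := (mul_le_mul_iff_right₀ hR).mp hgoal
    push_cast
    linarith [hfin]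

lemma down_ge (pi : ℕ → ℝ) (hpos : ∀ k, 0 ≤ pi k) (R : ℝ) (hR : 0 < R) (n : ℕ)
    (hrec : ∀ k, k < n → R * pi k = ((k:ℝ)+1) * pi (k+1)) :
    ∀ j, j ≤ n → ((j:ℝ) ≤ (n:ℝ) - R) → pi n ≤ pi (n - j) := by
  intro j
  induction j with
  | zero => intro _ _; simp
  | succ j ih =>
    intro hjn hjR
    push_cast at hjR
    have hjn' : j ≤ n := by omega
    have IH := ih hjn' (by linarith)
    have hk : n - (j+1) < n := by omega
    have hrec' := hrec (n - (j+1)) hk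
    have hplus : n - (j+1) + 1 = n - j := by omega
    rw [hplus] at hrec'
    have hcast : ((n - (j+1) : ℕ) : ℝ) + 1 = (n:ℝ) - (j:ℝ) := by
      rw [Nat.cast_sub hjn]; push_cast; ring
    rw [hcast] at hrec'
    have hpnj := hpos (n - j)
    have h1 : R * pi (n - j) ≤ R * pi (n - (j+1)) := by
      rw [hrec']
      have h : R ≤ (n:ℝ) - (j:ℝ) := by linarith
      nlinarith
    have hfin := (mul_le_mul_iff_right₀ hR).mp h1
    linarith [IH]

lemma pin_bounds (pi : ℕ → ℝ) (hpos : ∀ k, 0 ≤ pi k) (hsum : Summable pi)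
    (htot : (∑' k, pi k) = 1) (R : ℝ) (hR : 0 < R) (n : ℕ) (hn : 1 ≤ n)
    (hRn : R < (n:ℝ))
    (hrec : ∀ k, k < n → R * pi k = ((k:ℝ)+1) * pi (k+1)) :
    pi n * Real.sqrt R ≤ 2 ∧ pi n * ((n:ℝ) - R) ≤ 1 := by
  have hicc : ∀ m : ℕ, m < n → ∀ c : ℝ, 0 ≤ c →
      (∀ j, j ≤ m → c ≤ pi (n - j)) → ((m:ℝ)+1) * c ≤ 1 := by
    intro m hmn c hc hlow
    have hcard : (Finset.Icc (n - m) n).card = m + 1 := by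
      rw [Nat.card_Icc]; omega
    have hsle : ∑ k ∈ Finset.Icc (n - m) n, pi k ≤ 1 := by
      rw [← htot]; exact hsum.sum_le_tsum _ (fun i _ => hpos i)
    have hge : (m+1 : ℕ) • c ≤ ∑ k ∈ Finset.Icc (n - m) n, pi k := by
      rw [← hcard]
      apply Finset.card_nsmul_le_sum
      intro k hk
      rw [Finset.mem_Icc] at hk
      have hj : n - k ≤ m := by omega
      have hek : n - (n - k) = k := by omega
      rw [← hek]; exact hlow (n - k) hj
    have hle2 : ((m:ℝ)+1) * c ≤ ∑ k ∈ Finset.Icc (n - m) n, pi k := by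
      rw [nsmul_eq_mul] at hge; push_cast at hge; linarith
    linarith
  constructor
  · set m := ⌊Real.sqrt R⌋₊ with hm
    have hsq0 := Real.sqrt_nonneg R
    have hmle : (m:ℝ) ≤ Real.sqrt R := Nat.floor_le hsq0
    have hsqlt : Real.sqrt R < (n:ℝ) := by
      rw [show Real.sqrt R < (n:ℝ) ↔ R < (n:ℝ)^2 from Real.sqrt_lt' (by positivity)]
      have h1n : (1:ℝ) ≤ n := by exact_mod_cast hn
      nlinarith
    have hmn : m < n := by exact_mod_cast hmle.trans_lt hsqlt
    have hlow : ∀ j, j ≤ m → pi n / 2 ≤ pi (n - j) := by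
      intro j hj
      have hjle : (j:ℝ) ≤ Real.sqrt R := le_trans (by exact_mod_cast hj) hmle
      have hdh := down_half pi hpos R hR n hRn.le hrec j (by omega) hjle
      have hjsq : (j:ℝ)^2 ≤ R := by
        nlinarith [Real.sq_sqrt hR.le, Nat.cast_nonneg (α := ℝ) j]
      nlinarith [hpos n, hpos (n - j), hR]
    have hres := hicc m hmn (pi n / 2) (by linarith [hpos n]) hlow
    have hfl := Nat.lt_floor_add_one (Real.sqrt R)
    nlinarith [hpos n]
  · set m := ⌊(n:ℝ) - R⌋₊ with hm
    have hd0 : (0:ℝ) ≤ (n:ℝ) - R := by linarith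
    have hmle : (m:ℝ) ≤ (n:ℝ) - R := Nat.floor_le hd0
    have hmn : m < n := by
      have h : (m:ℝ) < (n:ℝ) := by linarith
      exact_mod_cast h
    have hlow : ∀ j, j ≤ m → pi n ≤ pi (n - j) := by
      intro j hj
      exact down_ge pi hpos R hR n hrec j (by omega)
        (le_trans (by exact_mod_cast hj) hmle)
    have hres := hicc m hmn (pi n) (hpos n) hlow
    have hfl := Nat.lt_floor_add_one ((n:ℝ) - R)
    nlinarith [hpos n]

lemma aux_le4 (d : ℝ) (h0 : 0 < d) (h : d^2 ≤ 10) : d ≤ 4 := by nlinarith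

set_option maxHeartbeats 4000000 in
theorem erlangC_mgf_bounds :
    ∃ C : ℝ, 0 < C ∧
      ∀ (lam mu : ℝ) (n : ℕ), 0 < lam → 0 < mu → 1 ≤ n →
      ∀ R δ ζ rho : ℝ,
        R = lam / mu → R < (n : ℝ) →
        δ = 1 / Real.sqrt R → ζ = δ * (R - (n : ℝ)) →
        rho = R / (n : ℝ) → (0.1 : ℝ) ≤ rho →
      ∀ pi : ℕ → ℝ,
        (∀ k, 0 ≤ pi k) → (∑' k : ℕ, pi k) = 1 →
        (∀ k : ℕ, lam * pi k = mu * min ((k : ℝ) + 1) (n : ℝ) * pi (k + 1)) →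
      (∀ gam : ℝ, (2 + δ * |ζ|) / (2 * |ζ|) < gam →
        (Summable fun k : ℕ =>
          if -ζ ≤ δ * ((k : ℝ) - R)
          then pi k * Real.exp ((2 * |ζ| / (2 + δ * |ζ|) - 1 / gam) * (δ * ((k : ℝ) - R)))
          else 0) ∧
        (∑' k : ℕ,
          if -ζ ≤ δ * ((k : ℝ) - R)
          then pi k * Real.exp ((2 * |ζ| / (2 + δ * |ζ|) - 1 / gam) * (δ * ((k : ℝ) - R)))
          else 0)
          ≤ gam * C * Real.exp (2 * ζ ^ 2 / (2 + δ * |ζ|))) ∧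
      ((Summable fun k : ℕ =>
          if -ζ ≤ δ * ((k : ℝ) - R)
          then pi k * Real.exp ((2 * |ζ| / (2 + δ * |ζ|)) * (δ * ((k : ℝ) - R)))
          else 0) ∧
        (∑' k : ℕ,
          if -ζ ≤ δ * ((k : ℝ) - R)
          then pi k * Real.exp ((2 * |ζ| / (2 + δ * |ζ|)) * (δ * ((k : ℝ) - R)))
          else 0)
          ≤ (1 / δ ^ 2) * (1 / |ζ| + δ) ^ 3 * C * Real.exp (2 * ζ ^ 2 / (2 + δ * |ζ|))) := by
  refine ⟨26, by norm_num, ?_⟩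
  intro lam mu n hlam hmu hn R δ ζ rho hRdef hRn hδdef hζdef hrhodef hrho01 pi hpos htot hbal
  -- basic positivity facts
  have hR0 : 0 < R := hRdef ▸ div_pos hlam hmu
  have hn0 : (0:ℝ) < (n:ℝ) := by exact_mod_cast Nat.pos_of_ne_zero (by omega)
  have hsqrt : 0 < Real.sqrt R := Real.sqrt_pos.mpr hR0
  have hδ0 : 0 < δ := by rw [hδdef]; positivity
  have hδsqrt : δ * Real.sqrt R = 1 := by rw [hδdef]; field_simp
  have hδsq : δ^2 * R = 1 := by
    calc δ^2 * R = (δ * Real.sqrt R)^2 := by rw [mul_pow, Real.sq_sqrt hR0.le]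
      _ = 1 := by rw [hδsqrt]; norm_num
  have hζ0 : ζ < 0 := by
    rw [hζdef]
    have : R - (n:ℝ) < 0 := by linarith
    exact mul_neg_of_pos_of_neg hδ0 this
  have habs : |ζ| = δ * ((n:ℝ) - R) := by
    rw [abs_of_neg hζ0, hζdef]; ring
  have hζa0 : 0 < |ζ| := abs_pos.mpr hζ0.ne
  obtain ⟨x, hxdef⟩ : ∃ x : ℝ, x = δ * |ζ| := ⟨_, rfl⟩
  have hx0 : 0 < x := by rw [hxdef]; exact mul_pos hδ0 hζa0
  have hxval : x = δ^2 * ((n:ℝ) - R) := by rw [hxdef, habs]; ring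
  have hxR : x * R = (n:ℝ) - R := by
    have : x * R = (δ^2 * R) * ((n:ℝ) - R) := by rw [hxval]; ring
    rw [this, hδsq, one_mul]
  have h1x0 : (0:ℝ) < 1 + x := by linarith
  have hrho0 : 0 < rho := by rw [hrhodef]; positivity
  have hrho1x : rho * (1 + x) = 1 := by
    have h1 : R * (1 + x) = (n:ℝ) := by
      have h2 : R * (1 + x) = R + x * R := by ring
      rw [h2, hxR]; ring
    rw [hrhodef, div_mul_eq_mul_div, h1, div_self hn0.ne']
  -- recurrence facts
  have hlamR : lam = R * mu := by rw [hRdef]; field_simp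
  have hrecR : ∀ k, k < n → R * pi k = ((k:ℝ)+1) * pi (k+1) := by
    intro k hk
    have hmin : min ((k:ℝ)+1) (n:ℝ) = (k:ℝ)+1 := by
      apply min_eq_left
      have : (k:ℝ)+1 ≤ (n:ℝ) := by exact_mod_cast Nat.succ_le_of_lt hk
      linarith
    have hb := hbal k
    rw [hmin, hlamR] at hb
    have := mul_left_cancel₀ hmu.ne' (by linarith [hb] : mu * (R * pi k) = mu * (((k:ℝ)+1) * pi (k+1)))
    linarith [this]
  have htail : ∀ j, pi (n + j) = pi n * rho ^ j := by
    intro j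
    induction j with
    | zero => simp
    | succ j ih =>
      have hmin : min (((n+j:ℕ):ℝ)+1) (n:ℝ) = (n:ℝ) := by
        apply min_eq_right
        push_cast
        linarith [Nat.cast_nonneg (α := ℝ) j]
      have hb := hbal (n + j)
      rw [hmin, hlamR] at hb
      have hb2 : R * pi (n+j) = (n:ℝ) * pi (n+j+1) :=
        mul_left_cancel₀ hmu.ne' (by linarith [hb] : mu * (R * pi (n+j)) = mu * ((n:ℝ) * pi (n+j+1)))
      have hstep : pi (n + (j+1)) = rho * pi (n + j) := by
        have hplus : n + (j+1) = n + j + 1 := by omega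
        rw [hplus, hrhodef, div_mul_eq_mul_div, hb2, mul_comm ((n:ℝ)) (pi (n+j+1)),
          mul_div_assoc, div_self hn0.ne', mul_one]
      rw [hstep, ih]; ring
  have hsumm : Summable pi := by
    by_contra hns
    rw [tsum_eq_zero_of_not_summable hns] at htot
    norm_num at htot
  have hpb := pin_bounds pi hpos hsumm htot R hR0 n hn hRn hrecR
  have hpin0 := hpos n
  have hpinδ : pi n ≤ 2 * δ := by
    calc pi n = (pi n * Real.sqrt R) * δ := by
          rw [mul_assoc, mul_comm (Real.sqrt R) δ, hδsqrt, mul_one]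
      _ ≤ 2 * δ := mul_le_mul_of_nonneg_right hpb.1 hδ0.le
  have hpinζ : pi n * |ζ| ≤ δ := by
    rw [habs]
    calc pi n * (δ * ((n:ℝ) - R)) = δ * (pi n * ((n:ℝ) - R)) := by ring
      _ ≤ δ * 1 := mul_le_mul_of_nonneg_left hpb.2 hδ0.le
      _ = δ := mul_one δ
  -- master lemma
  have master : ∀ θ : ℝ, rho * Real.exp (θ*δ) < 1 →
      (Summable fun k : ℕ => if -ζ ≤ δ * ((k : ℝ) - R)
        then pi k * Real.exp (θ * (δ * ((k : ℝ) - R))) else 0) ∧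
      (∑' k : ℕ, if -ζ ≤ δ * ((k : ℝ) - R)
        then pi k * Real.exp (θ * (δ * ((k : ℝ) - R))) else 0)
        = pi n * Real.exp (θ * (δ * ((n:ℝ) - R))) / (1 - rho * Real.exp (θ*δ)) := by
    intro θ hq1
    apply geom_aux _ n _ _ (mul_nonneg hrho0.le (Real.exp_pos _).le) hq1
    · intro k hk
      have hcond : ¬(-ζ ≤ δ * ((k:ℝ) - R)) := by
        intro hle
        rw [hζdef] at hle
        have hkn : (k:ℝ) < (n:ℝ) := by exact_mod_cast hk
        have hp : 0 < δ * ((n:ℝ) - (k:ℝ)) := mul_pos hδ0 (by linarith only [hkn])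
        have hle2 : δ * ((n:ℝ) - R) ≤ δ * ((k:ℝ) - R) := by
          have : -(δ * (R - (n:ℝ))) = δ * ((n:ℝ) - R) := by ring
          linarith only [hle, this.ge, this.le]
        nlinarith [hle2, hp]
      simp [hcond]
    · intro j
      have hcond : -ζ ≤ δ * (((n+j : ℕ):ℝ) - R) := by
        rw [hζdef]; push_cast
        have hp : 0 ≤ δ * (j:ℝ) := mul_nonneg hδ0.le (Nat.cast_nonneg j)
        nlinarith [hp]
      rw [if_pos hcond, htail j]
      have hexp : θ * (δ * (((n+j:ℕ):ℝ) - R)) = θ * (δ * ((n:ℝ) - R)) + (j:ℝ) * (θ*δ) := by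
        push_cast; ring
      rw [hexp, Real.exp_add, Real.exp_nat_mul, mul_pow]
      ring
  -- the theta2 value
  have hθ2δ : (2 * |ζ| / (2 + δ * |ζ|)) * δ = 2*x/(2+x) := by
    rw [hxdef]; ring
  have hE : (2 * |ζ| / (2 + δ * |ζ|)) * (δ * ((n:ℝ) - R)) = 2 * ζ ^ 2 / (2 + δ * |ζ|) := by
    rw [← habs, ← sq_abs ζ]; ring
  have hexpE0 : 0 < Real.exp (2 * ζ ^ 2 / (2 + δ * |ζ|)) := Real.exp_pos _
  -- bound on q
  have hkey := key_exp x hx0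
  have hq3 : rho * Real.exp (2*x/(2+x)) * (1+x)^3 ≤ (1+x)^3 - (1/13)*x^3 := by
    calc rho * Real.exp (2*x/(2+x)) * (1+x)^3
        = (rho * (1+x)) * (Real.exp (2*x/(2+x)) * (1+x)^2) := by ring
      _ = Real.exp (2*x/(2+x)) * (1+x)^2 := by rw [hrho1x, one_mul]
      _ ≤ (1+x)^3 - (1/13)*x^3 := hkey
  have hqlt : rho * Real.exp ((2 * |ζ| / (2 + δ * |ζ|)) * δ) < 1 := by
    rw [hθ2δ]
    by_contra hcon
    push_neg at hcon
    have h2 := mul_le_mul_of_nonneg_right hcon (pow_pos h1x0 3).le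
    rw [one_mul] at h2
    linarith only [hq3, h2, pow_pos hx0 3]
  have hqgap : (1/13)*x^3/(1+x)^3 ≤ 1 - rho * Real.exp ((2 * |ζ| / (2 + δ * |ζ|)) * δ) := by
    rw [hθ2δ]
    rw [div_le_iff₀ (pow_pos h1x0 3)]
    have hexpand : (1 - rho * Real.exp (2*x/(2+x))) * (1+x)^3
        = (1+x)^3 - rho * Real.exp (2*x/(2+x)) * (1+x)^3 := by ring
    rw [hexpand]
    linarith only [hq3]
  constructor
  · -- part (i)
    intro gam hgam
    have hgam0 : 0 < gam := lt_trans (by positivity) hgam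
    have h2x0 : (0:ℝ) < 2 + δ * |ζ| := by positivity
    have hinv : 1/gam < 2 * |ζ| / (2 + δ * |ζ|) := by
      rw [div_lt_div_iff₀ hgam0 h2x0]
      rw [div_lt_iff₀ (by positivity : (0:ℝ) < 2 * |ζ|)] at hgam
      linarith only [hgam]
    have hsplit : (2 * |ζ| / (2 + δ * |ζ|) - 1 / gam) * δ
        = (2 * |ζ| / (2 + δ * |ζ|)) * δ + (-(δ/gam)) := by ring
    have hr1eq : rho * Real.exp ((2 * |ζ| / (2 + δ * |ζ|) - 1 / gam) * δ)
        = rho * Real.exp ((2 * |ζ| / (2 + δ * |ζ|)) * δ) * Real.exp (-(δ/gam)) := by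
      rw [hsplit, Real.exp_add]; ring
    have hexpneg1 : Real.exp (-(δ/gam)) ≤ 1 := by
      rw [Real.exp_le_one_iff]
      have : 0 < δ/gam := by positivity
      linarith
    have hq0' : 0 ≤ rho * Real.exp ((2 * |ζ| / (2 + δ * |ζ|)) * δ) := by positivity
    have hr1lt : rho * Real.exp ((2 * |ζ| / (2 + δ * |ζ|) - 1 / gam) * δ) < 1 := by
      rw [hr1eq]
      calc rho * Real.exp ((2 * |ζ| / (2 + δ * |ζ|)) * δ) * Real.exp (-(δ/gam))
          ≤ rho * Real.exp ((2 * |ζ| / (2 + δ * |ζ|)) * δ) * 1 :=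
            mul_le_mul_of_nonneg_left hexpneg1 hq0'
        _ < 1 := by rw [mul_one]; exact hqlt
    obtain ⟨hS, hT⟩ := master (2 * |ζ| / (2 + δ * |ζ|) - 1 / gam) hr1lt
    refine ⟨hS, ?_⟩
    rw [hT]
    -- numerator bound
    have hnum : pi n * Real.exp ((2 * |ζ| / (2 + δ * |ζ|) - 1 / gam) * (δ * ((n:ℝ) - R)))
        ≤ pi n * Real.exp (2 * ζ ^ 2 / (2 + δ * |ζ|)) := by
      apply mul_le_mul_of_nonneg_left _ hpin0
      apply Real.exp_le_exp.mpr
      rw [← hE]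
      have h0 : 0 ≤ δ * ((n:ℝ) - R) := mul_nonneg hδ0.le (by linarith)
      have h1 : (0:ℝ) ≤ (1/gam) * (δ * ((n:ℝ) - R)) :=
        mul_nonneg (by positivity) h0
      linarith [h1]
    -- denominator bound
    have hd : 1 - Real.exp (-(δ/gam)) ≤ 1 - rho * Real.exp ((2 * |ζ| / (2 + δ * |ζ|) - 1 / gam) * δ) := by
      rw [hr1eq]
      have hqle1 : rho * Real.exp ((2 * |ζ| / (2 + δ * |ζ|)) * δ) ≤ 1 := hqlt.le
      have := mul_le_of_le_one_left (Real.exp_pos (-(δ/gam))).le hqle1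
      linarith [this]
    have hd0 : 0 < 1 - Real.exp (-(δ/gam)) := by
      have : Real.exp (-(δ/gam)) < 1 := by
        rw [Real.exp_lt_one_iff]
        have : 0 < δ/gam := by positivity
        linarith
      linarith
    -- pi n ≤ 26 * gam * d
    have hpind : pi n ≤ 26 * gam * (1 - Real.exp (-(δ/gam))) := by
      have hδ10 : δ^2 ≤ 10 := by
        have hRge : (1:ℝ)/10 ≤ R / (n:ℝ) := by rw [← hrhodef]; norm_num at hrho01 ⊢; linarith only [hrho01]
        have hn1 : (1:ℝ) ≤ (n:ℝ) := by exact_mod_cast hn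
        have hR110 : (1:ℝ)/10 ≤ R := by
          rw [le_div_iff₀ hn0] at hRge
          linarith only [hRge, hn1]
        have hm := mul_le_mul_of_nonneg_left hR110 (sq_nonneg δ)
        linarith only [hm, hδsq.le, hδsq.ge]
      have hδ4 : δ ≤ 4 := aux_le4 δ hδ0 hδ10
      by_cases hcase : δ/gam ≤ 1
      · have h4 := one_sub_exp_neg (δ/gam) (by positivity) hcase
        have hgd : gam * (δ/gam) = δ := by field_simp
        have h5 : 26 * gam * (δ/gam/4) ≤ 26 * gam * (1 - Real.exp (-(δ/gam))) :=
          mul_le_mul_of_nonneg_left h4 (by positivity)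
        have h6 : 26 * gam * (δ/gam/4) = (26/4) * (gam * (δ/gam)) := by ring
        rw [h6, hgd] at h5
        linarith [hpinδ, h5, hδ0]
      · push_neg at hcase
        have he1 : Real.exp (-(δ/gam)) ≤ Real.exp (-1) := by
          apply Real.exp_le_exp.mpr; linarith
        have he2 : Real.exp (-1 : ℝ) ≤ 1/2 := by
          rw [Real.exp_neg]
          have h2e : (2:ℝ) ≤ Real.exp 1 := by
            have := Real.add_one_le_exp (1:ℝ)
            linarith
          rw [inv_le_comm₀ (by positivity) (by norm_num)]
          linarith
        have hdge : 1/2 ≤ 1 - Real.exp (-(δ/gam)) := by linarith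
        -- pi n ≤ 13 gam
        have hgζ : 1 < gam * |ζ| := by
          rw [div_lt_iff₀ (by positivity : (0:ℝ) < 2 * |ζ|)] at hgam
          have hp : 0 < δ * |ζ| := mul_pos hδ0 hζa0
          linarith only [hgam, hp]
        have hpg : pi n ≤ 13 * gam := by
          have e1 : pi n * 1 ≤ pi n * (gam * |ζ|) :=
            mul_le_mul_of_nonneg_left hgζ.le hpin0
          have e2 : gam * (pi n * |ζ|) ≤ gam * δ :=
            mul_le_mul_of_nonneg_left hpinζ hgam0.le
          have e3 : gam * δ ≤ gam * 4 := mul_le_mul_of_nonneg_left hδ4 hgam0.le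
          have e4 : pi n * (gam * |ζ|) = gam * (pi n * |ζ|) := by ring
          linarith only [e1, e2, e3, e4.le, e4.ge, hgam0]
        have h7 : 26 * gam * (1/2) ≤ 26 * gam * (1 - Real.exp (-(δ/gam))) :=
          mul_le_mul_of_nonneg_left hdge (by positivity)
        linarith [hpg, h7]
    -- assemble
    calc pi n * Real.exp ((2 * |ζ| / (2 + δ * |ζ|) - 1 / gam) * (δ * ((n:ℝ) - R)))
          / (1 - rho * Real.exp ((2 * |ζ| / (2 + δ * |ζ|) - 1 / gam) * δ))
        ≤ pi n * Real.exp (2 * ζ ^ 2 / (2 + δ * |ζ|)) / (1 - Real.exp (-(δ/gam))) := by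
          apply div_le_div₀ (by positivity) hnum hd0 hd
      _ ≤ gam * 26 * Real.exp (2 * ζ ^ 2 / (2 + δ * |ζ|)) := by
          rw [div_le_iff₀ hd0]
          have h8 := mul_le_mul_of_nonneg_right hpind hexpE0.le
          have h9 : 26 * gam * (1 - Real.exp (-(δ/gam))) * Real.exp (2 * ζ ^ 2 / (2 + δ * |ζ|))
              = gam * 26 * Real.exp (2 * ζ ^ 2 / (2 + δ * |ζ|)) * (1 - Real.exp (-(δ/gam))) := by
            ring
          linarith only [h8, h9.le, h9.ge]
  · -- part (ii)
    obtain ⟨hS, hT⟩ := master (2 * |ζ| / (2 + δ * |ζ|)) hqlt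
    refine ⟨hS, ?_⟩
    rw [hT, hE]
    have hc0 : (0:ℝ) < (1/13)*x^3/(1+x)^3 := by positivity
    have hd0 : 0 < 1 - rho * Real.exp ((2 * |ζ| / (2 + δ * |ζ|)) * δ) := by linarith [hqlt]
    have h1 : pi n * Real.exp (2 * ζ ^ 2 / (2 + δ * |ζ|))
        / (1 - rho * Real.exp ((2 * |ζ| / (2 + δ * |ζ|)) * δ))
        ≤ (2*δ) * Real.exp (2 * ζ ^ 2 / (2 + δ * |ζ|)) / ((1/13)*x^3/(1+x)^3) := by
      apply div_le_div₀ (by positivity) _ hc0 hqgap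
      apply mul_le_mul_of_nonneg_right hpinδ hexpE0.le
    refine le_trans h1 (le_of_eq ?_)
    have heq : (2*δ) / ((1/13)*x^3/(1+x)^3) = (1 / δ ^ 2) * (1 / |ζ| + δ) ^ 3 * 26 := by
      have hζeq : |ζ| = x/δ := by rw [hxdef]; field_simp
      rw [hζeq]
      field_simp
      ring
    calc (2*δ) * Real.exp (2 * ζ ^ 2 / (2 + δ * |ζ|)) / ((1/13)*x^3/(1+x)^3)
        = ((2*δ) / ((1/13)*x^3/(1+x)^3)) * Real.exp (2 * ζ ^ 2 / (2 + δ * |ζ|)) := by ring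
      _ = (1 / δ ^ 2) * (1 / |ζ| + δ) ^ 3 * 26 * Real.exp (2 * ζ ^ 2 / (2 + δ * |ζ|)) := by rw [heq]
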